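/- arXiv:2205.06375 — 2 statements merged into one kernel-verified Lean document; each statement's English description precedes it below -/
import Mathlib

section
/- Let w be a nonempty area sequence with maximum value m, and let i_0(w) be the position of the leftmost letter equal to m in the rightmost block of consecutive letters equal to m in w. Then dinv(ins_{i_0(w) − 1}(w)) = dinv(w) + |Maxb(w)| + |Maxa(w)|, where Maxb(w) = { i : w_i = m } and Maxa(w) = { i : w_i = m − 1 and w_j < m for all j > i }. -/
/-- The `i`-th letter of the word `w` (`1`-indexed, as in the paper);
defaults to `0` out of range. -/
def get1 (w : List ℕ) (i : ℕ) : ℕ := w.getD (i - 1) 0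

/-- `w` is the area sequence of a Dyck path: the first letter is `0` and each
letter exceeds the previous one by at most one. -/
def IsAreaSeq (w : List ℕ) : Prop :=
  (w ≠ [] → get1 w 1 = 0) ∧ ∀ i, 1 ≤ i → i < w.length → get1 w (i + 1) ≤ get1 w i + 1

/-- Insertion at position `i` (for `0 ≤ i ≤ n`): `ins w 0` prepends a `0`, and
for `1 ≤ i ≤ n`, `ins w i` inserts the letter `w_i + 1` just after position `i`. -/
def ins (w : List ℕ) (i : ℕ) : List ℕ :=
  w.take i ++ (if i = 0 then 0 else get1 w i + 1) :: w.drop i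

/-- The area statistic: the sum of the letters. -/
def area (w : List ℕ) : ℕ := w.sum

/-- The dinv statistic: `dinv w = Σ_i d_i` where `d_i` is the number of `j > i`
with `w_j = w_i` or `w_j = w_i - 1`. -/
def dinv (w : List ℕ) : ℕ :=
  ∑ i ∈ Finset.Icc 1 w.length,
    ((Finset.Ioc i w.length).filter
      (fun j => get1 w j = get1 w i ∨ get1 w j + 1 = get1 w i)).card

/-- The maximal value of a word (`0` for the empty word). -/
def maxVal (w : List ℕ) : ℕ := w.foldr max 0

/-- Positions of the letters of maximal value `m`. -/
def Maxb (w : List ℕ) : Finset ℕ :=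
  (Finset.Icc 1 w.length).filter (fun i => get1 w i = maxVal w)

/-- Positions `i` with `w_i = m - 1` such that all letters after position `i`
are `< m`. -/
def Maxa (w : List ℕ) : Finset ℕ :=
  (Finset.Icc 1 w.length).filter (fun i =>
    get1 w i + 1 = maxVal w ∧ ∀ j ∈ Finset.Ioc i w.length, get1 w j < maxVal w)

/-- The position of the leftmost letter equal to the maximal value `m` in the
rightmost block of consecutive letters equal to `m`. -/
def i0 (w : List ℕ) : ℕ :=
  ((Finset.Icc 1 w.length).filter (fun i =>
    get1 w i = maxVal w ∧ (i = 1 ∨ get1 w (i - 1) ≠ maxVal w))).sup id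

/-- The admissible insertion positions of `w`, listed in admissible order:
the elements of `Maxb w` in decreasing order, then the elements of `Maxa w`
in decreasing order, then `i0 w - 1`.  The empty word has the single
admissible insertion position `0`. -/
def admissible (w : List ℕ) : List ℕ :=
  if w = [] then [0]
  else ((Maxb w).sort (· ≤ ·)).reverse ++ ((Maxa w).sort (· ≤ ·)).reverse ++ [i0 w - 1]

/-- Auxiliary version of the map `ψ`, reading the reversed word. -/
def psiRev : List ℕ → List ℕ
  | [] => []
  | a :: u => ins (psiRev u) ((admissible (psiRev u)).getD a 0)

/-- The map `ψ`: `ψ(ε) = ε` and `ψ(u a) = ins_{c_a}(ψ(u))` where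
`c_0, c_1, …, c_k` are the admissible insertion positions of `ψ(u)` in
admissible order. -/
def psi (w : List ℕ) : List ℕ := psiRev w.reverse

/-- The bounce sequence: `b_1 = 0`, and `b_i = b_{i-1} + 1` if
`b_{i-1} + 1 ≤ w_i`, otherwise `b_i = 0`. -/
def bseq (w : List ℕ) : ℕ → ℕ
  | 0 => 0
  | 1 => 0
  | (i + 2) => if bseq w (i + 1) + 1 ≤ get1 w (i + 2) then bseq w (i + 1) + 1 else 0

/-- The bounces of `w`: positions `1 < i ≤ n` with `b_i = 0`. -/
def bounces (w : List ℕ) : Finset ℕ :=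
  (Finset.Icc 2 w.length).filter (fun i => bseq w i = 0)

/-- The bounce statistic: the sum of the reversed positions `n - i + 1` of the
bounces of `w`. -/
def bounce (w : List ℕ) : ℕ := ∑ i ∈ bounces w, (w.length - i + 1)

section Helpers

lemma getD_drop' (w : List ℕ) (i k : ℕ) : (w.drop i).getD k 0 = w.getD (i + k) 0 := by
  simp [List.getD_eq_getElem?_getD, List.getElem?_drop]

lemma sum_Ioc_shift (f : ℕ → ℕ) (i n : ℕ) :
    ∑ j ∈ Finset.Ioc i n, f j = ∑ k ∈ Finset.range (n - i), f (i + k + 1) := by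
  induction n with
  | zero => simp
  | succ n ih =>
    rcases le_or_gt i n with h | h
    · rw [Finset.sum_Ioc_succ_top h, ih]
      have h2 : n + 1 - i = (n - i) + 1 := by omega
      rw [h2, Finset.sum_range_succ]
      congr 2
      omega
    · have h1 : Finset.Ioc i (n+1) = ∅ := Finset.Ioc_eq_empty (by omega)
      have h2 : n + 1 - i = 0 := by omega
      simp [h1, h2]

lemma card_filter_range (w : List ℕ) (P : ℕ → Prop) [DecidablePred P] :
    ((Finset.range w.length).filter (fun k => P (w.getD k 0))).card
      = w.countP (fun a => decide (P a)) := by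
  induction w with
  | nil => simp
  | cons a u ih =>
    rw [Finset.card_filter] at ih ⊢
    simp only [List.length_cons]
    rw [Finset.sum_range_succ']
    simp only [List.getD_cons_succ, List.getD_cons_zero, List.countP_cons, ih]
    simp [Nat.add_comm]

lemma card_filter_Ioc (w : List ℕ) (i : ℕ) (P : ℕ → Prop) [DecidablePred P] :
    ((Finset.Ioc i w.length).filter (fun j => P (get1 w j))).card
      = (w.drop i).countP (fun a => decide (P a)) := by
  rw [Finset.card_filter, sum_Ioc_shift, ← card_filter_range (w.drop i) P, Finset.card_filter]
  rw [List.length_drop]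
  apply Finset.sum_congr rfl
  intro k _
  congr 1
  rw [getD_drop']
  show P (w.getD (i + k + 1 - 1) 0) = P (w.getD (i + k) 0)
  rfl

def dinvL : List ℕ → ℕ
  | [] => 0
  | a :: u => u.countP (fun b => decide (b = a ∨ b + 1 = a)) + dinvL u

lemma dinvL_eq_sum (w : List ℕ) :
    dinvL w = ∑ k ∈ Finset.range w.length,
      (w.drop (k+1)).countP (fun b => decide (b = w.getD k 0 ∨ b + 1 = w.getD k 0)) := by
  induction w with
  | nil => simp [dinvL]
  | cons a u ih =>
    simp only [List.length_cons]
    rw [Finset.sum_range_succ']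
    simp only [List.getD_cons_succ, List.getD_cons_zero, List.drop_succ_cons, List.drop_zero]
    rw [← ih]
    simp [dinvL, Nat.add_comm]

lemma dinv_eq_dinvL (w : List ℕ) : dinv w = dinvL w := by
  rw [dinv, dinvL_eq_sum]
  rw [show Finset.Icc 1 w.length = Finset.Ioc 0 w.length from Finset.Icc_add_one_left_eq_Ioc 0 w.length]
  rw [sum_Ioc_shift]
  simp only [Nat.sub_zero, Nat.zero_add]
  apply Finset.sum_congr rfl
  intro k hk
  simp only [Finset.mem_range] at hk
  rw [card_filter_Ioc w (k+1) (fun x => x = get1 w (k+1) ∨ x + 1 = get1 w (k+1))]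
  rfl

lemma dinvL_insert (t d : List ℕ) (v : ℕ) :
    dinvL (t ++ v :: d) = dinvL (t ++ d)
      + t.countP (fun a => decide (v = a ∨ v + 1 = a))
      + d.countP (fun b => decide (b = v ∨ b + 1 = v)) := by
  induction t with
  | nil => simp [dinvL]; omega
  | cons a t ih =>
    simp only [List.cons_append, dinvL, List.append_eq, List.countP_append, List.countP_cons, ih]
    rcases h : decide (v = a ∨ v + 1 = a) <;> simp [h] <;> omega

lemma countP_or (l : List ℕ) (p q : ℕ → Prop) [DecidablePred p] [DecidablePred q]
    (h : ∀ a, ¬ (p a ∧ q a)) :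
    l.countP (fun a => decide (p a ∨ q a))
      = l.countP (fun a => decide (p a)) + l.countP (fun a => decide (q a)) := by
  induction l with
  | nil => simp
  | cons a l ih =>
    simp only [List.countP_cons, ih]
    by_cases hp : p a <;> by_cases hq : q a
    · exact absurd ⟨hp, hq⟩ (h a)
    · simp [hp, hq]; omega
    · simp [hp, hq]; omega
    · simp [hp, hq]

lemma le_maxVal {w : List ℕ} {a : ℕ} (h : a ∈ w) : a ≤ w.foldr max 0 := by
  induction w with
  | nil => simp at h
  | cons b u ih =>
    rcases List.mem_cons.mp h with h | h
    · simp [h]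
    · exact le_trans (ih h) (by simp)

lemma maxVal_mem {w : List ℕ} (h : w ≠ []) : w.foldr max 0 ∈ w := by
  induction w with
  | nil => simp at h
  | cons b u ih =>
    rcases eq_or_ne u [] with h1 | h1
    · simp [h1]
    · have := ih h1
      simp only [List.foldr_cons]
      rcases Nat.le_total b (u.foldr max 0) with h2 | h2
      · rw [max_eq_right h2]; exact List.mem_cons_of_mem _ this
      · rw [max_eq_left h2]; exact List.mem_cons_self

end Helpers

/-- Inserting in a nonempty area sequence `w` at position `i0 w - 1` increases
the dinv by `|Maxb w| + |Maxa w|`. -/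
theorem dinv_ins_at_i0 (w : List ℕ) (hw : IsAreaSeq w) (hne : w ≠ []) :
    dinv (ins w (i0 w - 1)) = dinv w + (Maxb w).card + (Maxa w).card := by
  have hle : ∀ i, 1 ≤ i → i ≤ w.length → get1 w i ≤ maxVal w := by
    intro i h1 h2
    have hlt : i - 1 < w.length := by omega
    have hmem : get1 w i ∈ w := by
      show w.getD (i-1) 0 ∈ w
      rw [List.getD_eq_getElem?_getD, List.getElem?_eq_getElem hlt]
      exact List.getElem_mem hlt
    exact le_maxVal hmem
  -- the finset F defining i0
  have hi0F : i0 w = ((Finset.Icc 1 w.length).filter (fun i =>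
      get1 w i = maxVal w ∧ (i = 1 ∨ get1 w (i - 1) ≠ maxVal w))).sup id := rfl
  set F := (Finset.Icc 1 w.length).filter (fun i =>
      get1 w i = maxVal w ∧ (i = 1 ∨ get1 w (i - 1) ≠ maxVal w)) with hF
  -- the maximum is attained
  obtain ⟨k, hk, hkm⟩ := List.mem_iff_getElem.mp (maxVal_mem hne)
  have hget : get1 w (k+1) = maxVal w := by
    show w.getD (k+1-1) 0 = maxVal w
    rw [Nat.add_sub_cancel, List.getD_eq_getElem?_getD, List.getElem?_eq_getElem hk]
    exact hkm
  have hex : ∃ i, 1 ≤ i ∧ i ≤ w.length ∧ get1 w i = maxVal w :=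
    ⟨k+1, by omega, by omega, hget⟩
  have hFne : F.Nonempty := by
    refine ⟨Nat.find hex, ?_⟩
    obtain ⟨ha, hb, hc⟩ := Nat.find_spec hex
    rw [hF, Finset.mem_filter, Finset.mem_Icc]
    refine ⟨⟨ha, hb⟩, hc, ?_⟩
    by_cases he : Nat.find hex = 1
    · exact Or.inl he
    · refine Or.inr fun hcon => ?_
      have h2 : Nat.find hex - 1 < Nat.find hex := by omega
      exact Nat.find_min hex h2 ⟨by omega, by omega, hcon⟩
  obtain ⟨b, hbF, hsup⟩ := Finset.exists_mem_eq_sup F hFne id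
  have hi0mem : i0 w ∈ F := by rw [hi0F, hsup]; exact hbF
  rw [hF, Finset.mem_filter, Finset.mem_Icc] at hi0mem
  obtain ⟨⟨h1i0, hi0n⟩, hi0m, hi0alt⟩ := hi0mem
  have hsupF : ∀ j ∈ F, j ≤ i0 w := by
    intro j hj
    have := Finset.le_sup (f := id) hj
    rw [← hi0F] at this
    exact this
  -- block lemmas
  have h10 : ∀ j, i0 w < j → j ≤ w.length → get1 w j = maxVal w →
      get1 w (j-1) = maxVal w := by
    intro j hj1 hj2 hj3
    by_contra hc
    have hjF : j ∈ F := by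
      rw [hF, Finset.mem_filter, Finset.mem_Icc]
      exact ⟨⟨by omega, hj2⟩, hj3, Or.inr hc⟩
    have := hsupF j hjF
    omega
  have h11 : ∀ j, j ≤ w.length → ∀ i, i0 w ≤ i → i ≤ j → get1 w j = maxVal w →
      get1 w i = maxVal w := by
    intro j
    induction j with
    | zero => intro _ i hi hij _; omega
    | succ j ih =>
      intro hjn i hi hij hj
      rcases eq_or_lt_of_le hij with he | hlt
      · rw [he]; exact hj
      · have hjm : get1 w j = maxVal w := by
          have := h10 (j+1) (by omega) hjn hj
          simpa using this
        exact ih (by omega) i hi (by omega) hjm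
  set p := i0 w - 1 with hp
  have hpn : p ≤ w.length := by omega
  -- the inserted value is the maximum
  have hval : (if p = 0 then 0 else get1 w p + 1) = maxVal w := by
    by_cases hp0 : p = 0
    · rw [if_pos hp0]
      have h1 : i0 w = 1 := by omega
      have h2 : get1 w 1 = 0 := hw.1 hne
      rw [h1, h2] at hi0m
      exact hi0m
    · rw [if_neg hp0]
      have h2 : i0 w ≠ 1 := by omega
      have h3 : get1 w p ≠ maxVal w := by
        rcases hi0alt with h | h
        · exact absurd h h2
        · exact h
      have h4 : get1 w (p+1) ≤ get1 w p + 1 := hw.2 p (by omega) (by omega)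
      have h5 : get1 w (p+1) = maxVal w := by
        rw [show p + 1 = i0 w by omega]; exact hi0m
      have h6 : get1 w p ≤ maxVal w := hle p (by omega) (by omega)
      omega
  have hins : ins w p = w.take p ++ maxVal w :: w.drop p := by
    rw [ins, hval]
  -- Maxb card
  have hMaxb : (Maxb w).card = w.countP (fun a => decide (a = maxVal w)) := by
    rw [Maxb, show Finset.Icc 1 w.length = Finset.Ioc 0 w.length from
      Finset.Icc_add_one_left_eq_Ioc 0 w.length]
    have h := card_filter_Ioc w 0 (fun x => x = maxVal w)
    rw [List.drop_zero] at h
    convert h using 2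
  -- Maxa card
  have hMaxaset : Maxa w = (Finset.Ioc p w.length).filter (fun i => get1 w i + 1 = maxVal w) := by
    rw [Maxa]
    ext i
    simp only [Finset.mem_filter, Finset.mem_Icc, Finset.mem_Ioc]
    constructor
    · rintro ⟨⟨hi1, hin⟩, hia, hall⟩
      refine ⟨⟨?_, hin⟩, hia⟩
      by_contra hc
      have := hall (i0 w) ⟨by omega, hi0n⟩
      omega
    · rintro ⟨⟨hpi, hin⟩, hia⟩
      refine ⟨⟨by omega, hin⟩, hia, ?_⟩
      intro j hj
      have hjle : get1 w j ≤ maxVal w := hle j (by omega) hj.2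
      rcases eq_or_lt_of_le hjle with he | hlt
      · exfalso
        have := h11 j hj.2 i (by omega) (by omega) he
        omega
      · exact hlt
  have hMaxa : (Maxa w).card = (w.drop p).countP (fun b => decide (b + 1 = maxVal w)) := by
    rw [hMaxaset]
    have h := card_filter_Ioc w p (fun x => x + 1 = maxVal w)
    convert h using 2
  -- counting identities
  have htake : (w.take p).countP (fun a => decide (maxVal w = a ∨ maxVal w + 1 = a))
      = (w.take p).countP (fun a => decide (a = maxVal w)) := by
    apply List.countP_congr
    intro a ha
    have haw : a ∈ w := List.mem_of_mem_take ha
    have hma : a ≤ maxVal w := le_maxVal haw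
    simp only [decide_eq_true_eq]
    constructor
    · rintro (h | h) <;> omega
    · intro h; exact Or.inl h.symm
  have hdrop : (w.drop p).countP (fun b => decide (b = maxVal w ∨ b + 1 = maxVal w))
      = (w.drop p).countP (fun b => decide (b = maxVal w))
        + (w.drop p).countP (fun b => decide (b + 1 = maxVal w)) :=
    countP_or _ _ _ (fun a => by omega)
  have hsplit : w.countP (fun a => decide (a = maxVal w)) =
      (w.take p).countP (fun a => decide (a = maxVal w))
        + (w.drop p).countP (fun a => decide (a = maxVal w)) := by
    rw [← List.countP_append, List.take_append_drop]
  rw [hins, dinv_eq_dinvL w, dinv_eq_dinvL, dinvL_insert, List.take_append_drop,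
    htake, hdrop]
  omega
end

section
/- Let w = u a be an area sequence of size n ≥ 2 with u its prefix of size n − 1, and let b_1 … b_n be the bounce sequence of w. Then b_n = 0 if and only if max(ψ(w)) = max(ψ(u)) + 1. -/
-- basic get1 / ins API
theorem get1_eq_getD (w : List ℕ) (i : ℕ) : get1 w i = w.getD (i-1) 0 := rfl

theorem get1_out {w : List ℕ} {i : ℕ} (h : w.length < i) : get1 w i = 0 := by
  unfold get1
  apply List.getD_eq_default
  omega

theorem length_ins {w : List ℕ} {c : ℕ} (h : c ≤ w.length) : (ins w c).length = w.length + 1 := by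
  unfold ins
  simp
  omega

theorem get1_ins_le {w : List ℕ} {c j : ℕ} (hc : c ≤ w.length) (h1 : 1 ≤ j) (h2 : j ≤ c) :
    get1 (ins w c) j = get1 w j := by
  unfold ins get1
  rw [List.getD_append _ _ _ _ (by simp only [List.length_take, List.length_drop, List.length_cons, List.length_append]; omega)]
  rcases Nat.lt_or_ge (j-1) w.length with h | h
  · rw [List.getD_eq_getElem _ _ (by simp only [List.length_take, List.length_drop, List.length_cons, List.length_append]; omega), List.getD_eq_getElem _ _ h]
    simp [List.getElem_take]
  · omega

theorem get1_ins_self {w : List ℕ} {c : ℕ} (hc : c ≤ w.length) :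
    get1 (ins w c) (c+1) = (if c = 0 then 0 else get1 w c + 1) := by
  unfold ins get1
  rw [List.getD_append_right _ _ _ _ (by simp only [List.length_take, List.length_drop, List.length_cons, List.length_append]; omega)]
  rw [show c + 1 - 1 - (w.take c).length = 0 by simp only [List.length_take]; omega]
  simp

theorem get1_ins_gt {w : List ℕ} {c j : ℕ} (hc : c ≤ w.length) (h : c + 2 ≤ j) :
    get1 (ins w c) j = get1 w (j-1) := by
  unfold ins get1
  rw [List.getD_append_right _ _ _ _ (by simp only [List.length_take, List.length_drop, List.length_cons, List.length_append]; omega)]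
  rw [show j - 1 - (w.take c).length = (j - 1 - c - 1) + 1 by simp; omega]
  simp only [List.getD_cons_succ]
  rcases Nat.lt_or_ge (j-1-1) w.length with h2 | h2
  · rw [List.getD_eq_getElem _ _ (by simp only [List.length_take, List.length_drop, List.length_cons, List.length_append]; omega), List.getD_eq_getElem _ _ (by omega)]
    simp [List.getElem_drop]
    congr 1
    omega
  · rw [List.getD_eq_default _ _ (by simp only [List.length_take, List.length_drop, List.length_cons, List.length_append]; omega), List.getD_eq_default _ _ (by omega)]

-- maxVal API
theorem maxVal_append (u v : List ℕ) : maxVal (u ++ v) = max (maxVal u) (maxVal v) := by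
  induction u with
  | nil => simp [maxVal]
  | cons a t ih =>
      simp only [maxVal, List.cons_append, List.foldr_cons] at *
      rw [ih]
      exact (max_assoc _ _ _).symm

theorem maxVal_cons (a : ℕ) (v : List ℕ) : maxVal (a :: v) = max a (maxVal v) := rfl

theorem le_maxVal_of_mem {w : List ℕ} {x : ℕ} (h : x ∈ w) : x ≤ maxVal w := by
  induction w with
  | nil => simp at h
  | cons a t ih =>
      rw [maxVal_cons]
      rcases List.mem_cons.mp h with h | h
      · omega
      · exact le_trans (ih h) (le_max_right _ _)

theorem get1_le_maxVal (w : List ℕ) (i : ℕ) : get1 w i ≤ maxVal w := by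
  unfold get1
  rcases Nat.lt_or_ge (i-1) w.length with h | h
  · rw [List.getD_eq_getElem _ _ h]
    exact le_maxVal_of_mem (List.getElem_mem h)
  · rw [List.getD_eq_default _ _ h]; exact Nat.zero_le _

theorem exists_get1_eq_maxVal {w : List ℕ} (h : w ≠ []) :
    ∃ i, 1 ≤ i ∧ i ≤ w.length ∧ get1 w i = maxVal w := by
  have : maxVal w ∈ w := by
    induction w with
    | nil => simp at h
    | cons a t ih =>
        rw [maxVal_cons]
        rcases Nat.le_total (maxVal t) a with h1 | h1
        · simp [max_eq_left h1]
        · rw [max_eq_right h1]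
          rcases List.eq_nil_or_concat t with rfl | _
          · simp [maxVal] at h1 ⊢; omega
          · exact List.mem_cons_of_mem _ (ih (by rintro rfl; simp [maxVal] at h1 ⊢; revert h1; simp [*] at *) )
  obtain ⟨j, hj, hx⟩ := List.mem_iff_getElem.mp this
  refine ⟨j+1, by omega, by omega, ?_⟩
  show w.getD (j+1-1) 0 = _
  rw [show j+1-1 = j from rfl, List.getD_eq_getElem _ _ hj, hx]

theorem maxVal_ins {w : List ℕ} {c : ℕ} (hc : c ≤ w.length) :
    maxVal (ins w c) = max (if c = 0 then 0 else get1 w c + 1) (maxVal w) := by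
  have key : ∀ x, maxVal (w.take c ++ x :: w.drop c) = max x (maxVal w) := by
    intro x
    rw [maxVal_append, maxVal_cons]
    conv_rhs => rw [← List.take_append_drop c w, maxVal_append]
    ac_rfl
  exact key _

-- append lemmas and area-seq preservation
theorem get1_append_left {u : List ℕ} (v : List ℕ) {i : ℕ} (h1 : 1 ≤ i) (h2 : i ≤ u.length) :
    get1 (u ++ v) i = get1 u i := by
  unfold get1
  rw [List.getD_append _ _ _ _ (by omega)]

theorem get1_concat_last (u : List ℕ) (a : ℕ) : get1 (u ++ [a]) (u.length + 1) = a := by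
  unfold get1
  rw [List.getD_append_right _ _ _ _ (by omega)]
  simp

theorem isAreaSeq_prefix {u : List ℕ} {a : ℕ} (h : IsAreaSeq (u ++ [a])) : IsAreaSeq u := by
  constructor
  · intro hu
    have h1 := h.1 (by simp)
    rwa [get1_append_left _ le_rfl (by rcases u with _|⟨x,t⟩; simp at hu; simp)] at h1
  · intro i h1 h2
    have := h.2 i h1 (by simp; omega)
    rwa [get1_append_left _ (by omega) (by omega), get1_append_left _ (by omega) (by omega)] at this

theorem isAreaSeq_ins {w : List ℕ} {c : ℕ} (hw : IsAreaSeq w) (hc : c ≤ w.length) :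
    IsAreaSeq (ins w c) := by
  constructor
  · intro _
    rcases Nat.eq_zero_or_pos c with rfl | hcpos
    · have := get1_ins_self (w := w) (c := 0) (by omega)
      simpa using this
    · rw [get1_ins_le hc (by omega) (by omega)]
      exact hw.1 (by rintro rfl; simp at hc; omega)
  · intro i hi1 hi2
    rw [length_ins hc] at hi2
    rcases Nat.lt_or_ge (i+1) (c+1) with h1 | h1
    · -- i + 1 ≤ c
      rw [get1_ins_le hc (by omega) (by omega), get1_ins_le hc (by omega) (by omega)]
      exact hw.2 i hi1 (by omega)
    rcases Nat.eq_or_lt_of_le h1 with h2 | h2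
    · -- i = c
      have hc1 : c ≠ 0 := by omega
      rw [show i = c by omega, get1_ins_self hc, get1_ins_le hc (by omega) (by omega), if_neg hc1]
    rcases Nat.eq_or_lt_of_le h2 with h3 | h3
    · -- i = c + 1
      have hi : i = c + 1 := by omega
      subst hi
      rw [get1_ins_gt hc (by omega), get1_ins_self hc]
      simp only [Nat.add_sub_cancel]
      rcases Nat.eq_zero_or_pos c with rfl | hcpos
      · rw [if_pos rfl]
        have h5 : get1 w 1 = 0 := hw.1 (by rintro rfl; simp at hi2)
        simp [Nat.zero_add, h5]
      · rw [if_neg (by omega)]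
        rcases Nat.lt_or_ge c w.length with h4 | h4
        · have := hw.2 c (by omega) h4
          omega
        · rw [get1_out (by omega)]
          omega
    · -- i ≥ c + 2
      rw [get1_ins_gt hc (by omega), get1_ins_gt hc (by omega)]
      have := hw.2 (i-1) (by omega) (by omega)
      rw [show i - 1 + 1 = i by omega] at this
      rw [show i + 1 - 1 = i by omega]
      exact this

-- sorted list counting lemmas
theorem sortRevGetD_eq (s : Finset ℕ) {a : ℕ} (ha : a < s.card) :
    ((s.sort (·≤·)).reverse.getD a 0) = (s.sort (·≤·))[s.card - 1 - a]'(by rw [Finset.length_sort]; omega) := by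
  rw [List.getD_eq_getElem _ _ (by rw [List.length_reverse, Finset.length_sort]; omega),
    List.getElem_reverse]
  congr 1
  rw [Finset.length_sort]

theorem sortRevGetD_mem (s : Finset ℕ) {a : ℕ} (ha : a < s.card) :
    ((s.sort (·≤·)).reverse.getD a 0) ∈ s := by
  rw [sortRevGetD_eq s ha]
  rw [← Finset.mem_sort (α := ℕ) (· ≤ ·)]
  exact List.getElem_mem _

theorem card_filter_gt_sortRevGetD (s : Finset ℕ) {a : ℕ} (ha : a < s.card) :
    (s.filter (fun x => ((s.sort (·≤·)).reverse.getD a 0) < x)).card = a := by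
  set L := s.sort (·≤·) with hL
  have hk : L.length = s.card := Finset.length_sort _
  have hnd : L.Nodup := Finset.sort_nodup _ _
  have hslt : L.Pairwise (· < ·) := (Finset.sortedLT_sort s).pairwise
  have hpair := List.pairwise_iff_getElem.mp hslt
  have hceq := sortRevGetD_eq s ha
  simp only [← hL] at hceq
  have key : s.filter (fun x => (L.reverse.getD a 0) < x) = (L.drop (s.card - a)).toFinset := by
    ext x
    rw [Finset.mem_filter, List.mem_toFinset]
    constructor
    · rintro ⟨hxs, hcx⟩
      rw [← Finset.mem_sort (α := ℕ) (· ≤ ·), ← hL] at hxs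
      obtain ⟨j, hj, hxj⟩ := List.mem_iff_getElem.mp hxs
      have hja : s.card - a ≤ j := by
        by_contra hcon
        push_neg at hcon
        have : x ≤ L.reverse.getD a 0 := by
          rw [hceq]
          rcases Nat.lt_or_ge j (s.card - 1 - a) with h | h
          · exact le_of_lt (hxj ▸ hpair j (s.card - 1 - a) (by omega) (by omega) h)
          · have : j = s.card - 1 - a := by omega
            subst this
            omega
        omega
      refine List.mem_iff_getElem.mpr ⟨j - (s.card - a), by rw [List.length_drop]; omega, ?_⟩
      rw [List.getElem_drop]
      simp only [show s.card - a + (j - (s.card - a)) = j from by omega]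
      exact hxj
    · intro hx
      obtain ⟨i, hi, hxi⟩ := List.mem_iff_getElem.mp hx
      rw [List.length_drop] at hi
      rw [List.getElem_drop] at hxi
      constructor
      · rw [← Finset.mem_sort (α := ℕ) (· ≤ ·), ← hL]
        exact hxi ▸ List.getElem_mem _
      · rw [hceq, ← hxi]
        exact hpair _ _ (by omega) (by omega) (by omega)
  rw [key]
  rw [List.toFinset_card_of_nodup (hnd.sublist (List.drop_sublist _ _))]
  rw [List.length_drop]
  omega

-- Maxb / Maxa membership
theorem mem_Maxb {w : List ℕ} {i : ℕ} :
    i ∈ Maxb w ↔ (1 ≤ i ∧ i ≤ w.length) ∧ get1 w i = maxVal w := by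
  simp [Maxb, Finset.mem_filter, Finset.mem_Icc]

theorem mem_Maxa {w : List ℕ} {i : ℕ} :
    i ∈ Maxa w ↔ (1 ≤ i ∧ i ≤ w.length) ∧ get1 w i + 1 = maxVal w ∧
      ∀ j, i < j → j ≤ w.length → get1 w j < maxVal w := by
  simp [Maxa, Finset.mem_filter, Finset.mem_Icc, Finset.mem_Ioc, and_assoc]

-- Case 1 : insertion at a position of maximal value
section Case1
variable {w : List ℕ} {c : ℕ} (hc1 : 1 ≤ c) (hc2 : c ≤ w.length) (hcm : get1 w c = maxVal w)

include hc1 hc2 hcm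

theorem case1_maxVal : maxVal (ins w c) = maxVal w + 1 := by
  rw [maxVal_ins hc2, if_neg (by omega), hcm]
  omega

theorem case1_Maxb : Maxb (ins w c) = {c + 1} := by
  ext i
  rw [mem_Maxb, case1_maxVal hc1 hc2 hcm, length_ins hc2, Finset.mem_singleton]
  constructor
  · rintro ⟨⟨h1, h2⟩, h3⟩
    by_contra hne
    rcases Nat.lt_or_ge i (c+1) with h | h
    · rw [get1_ins_le hc2 h1 (by omega)] at h3
      have := get1_le_maxVal w i
      omega
    · rw [get1_ins_gt hc2 (by omega)] at h3
      have := get1_le_maxVal w (i-1)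
      omega
  · rintro rfl
    refine ⟨⟨by omega, by omega⟩, ?_⟩
    rw [get1_ins_self hc2, if_neg (by omega), hcm]

theorem case1_Maxa : Maxa (ins w c) = ((Maxb w).filter (fun x => c < x)).image (· + 1) := by
  ext i
  rw [mem_Maxa, case1_maxVal hc1 hc2 hcm, length_ins hc2, Finset.mem_image]
  constructor
  · rintro ⟨⟨h1, h2⟩, h3, h4⟩
    have hge : c + 2 ≤ i := by
      rcases Nat.lt_or_ge i (c+1) with h | h
      · exfalso
        have := h4 (c+1) (by omega) (by omega)
        rw [get1_ins_self hc2, if_neg (by omega), hcm] at this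
        omega
      · rcases Nat.eq_or_lt_of_le h with h' | h'
        · exfalso
          rw [← h', get1_ins_self hc2, if_neg (by omega), hcm] at h3
          omega
        · omega
    rw [get1_ins_gt hc2 hge] at h3
    refine ⟨i - 1, Finset.mem_filter.mpr ⟨mem_Maxb.mpr ⟨⟨by omega, by omega⟩, by omega⟩, by omega⟩, by omega⟩
  · rintro ⟨x, hx, rfl⟩
    rw [Finset.mem_filter, mem_Maxb] at hx
    obtain ⟨⟨⟨hx1, hx2⟩, hx3⟩, hx4⟩ := hx
    refine ⟨⟨by omega, by omega⟩, ?_, ?_⟩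
    · rw [get1_ins_gt hc2 (by omega)]
      simp only [Nat.add_sub_cancel]
      omega
    · intro j hj1 hj2
      rw [get1_ins_gt hc2 (by omega)]
      have := get1_le_maxVal w (j-1)
      omega

end Case1

-- Cases 2/3 : insertion at a position of value m - 1
section Case23
variable {w : List ℕ} {c : ℕ} (hc1 : 1 ≤ c) (hc2 : c ≤ w.length) (hcm : get1 w c + 1 = maxVal w)

include hc1 hc2 hcm

theorem case23_maxVal : maxVal (ins w c) = maxVal w := by
  rw [maxVal_ins hc2, if_neg (by omega), hcm]
  omega

theorem case23_Maxb : Maxb (ins w c) =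
    ((Maxb w).image (fun i => if i ≤ c then i else i + 1)) ∪ {c + 1} := by
  ext i
  rw [mem_Maxb, case23_maxVal hc1 hc2 hcm, length_ins hc2, Finset.mem_union, Finset.mem_image,
    Finset.mem_singleton]
  constructor
  · rintro ⟨⟨h1, h2⟩, h3⟩
    rcases Nat.lt_or_ge i (c+1) with h | h
    · rw [get1_ins_le hc2 h1 (by omega)] at h3
      exact Or.inl ⟨i, mem_Maxb.mpr ⟨⟨h1, by omega⟩, h3⟩, by rw [if_pos (by omega)]⟩
    · rcases Nat.eq_or_lt_of_le h with h' | h'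
      · exact Or.inr h'.symm
      · rw [get1_ins_gt hc2 (by omega)] at h3
        refine Or.inl ⟨i - 1, mem_Maxb.mpr ⟨⟨by omega, by omega⟩, h3⟩, ?_⟩
        rw [if_neg (by omega)]
        omega
  · rintro (⟨x, hx, rfl⟩ | rfl)
    · rw [mem_Maxb] at hx
      obtain ⟨⟨hx1, hx2⟩, hx3⟩ := hx
      by_cases hxc : x ≤ c
      · rw [if_pos hxc]
        exact ⟨⟨hx1, by omega⟩, by rw [get1_ins_le hc2 hx1 hxc]; exact hx3⟩
      · rw [if_neg hxc]
        refine ⟨⟨by omega, by omega⟩, ?_⟩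
        rw [get1_ins_gt hc2 (by omega)]
        simpa using hx3
    · refine ⟨⟨by omega, by omega⟩, ?_⟩
      rw [get1_ins_self hc2, if_neg (by omega)]
      exact hcm

theorem case23_card_Maxb : (Maxb (ins w c)).card = (Maxb w).card + 1 := by
  rw [case23_Maxb hc1 hc2 hcm]
  rw [Finset.card_union_of_disjoint]
  · rw [Finset.card_image_of_injective _ (fun i j h => by split_ifs at h <;> omega),
      Finset.card_singleton]
  · rw [Finset.disjoint_singleton_right, Finset.mem_image]
    rintro ⟨x, _, hx⟩
    split_ifs at hx <;> omega

theorem case23_Maxa : Maxa (ins w c) = ((Maxa w).filter (fun x => c < x)).image (· + 1) := by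
  ext i
  rw [mem_Maxa, case23_maxVal hc1 hc2 hcm, length_ins hc2, Finset.mem_image]
  constructor
  · rintro ⟨⟨h1, h2⟩, h3, h4⟩
    have hge : c + 2 ≤ i := by
      rcases Nat.lt_or_ge i (c+1) with h | h
      · exfalso
        have := h4 (c+1) (by omega) (by omega)
        rw [get1_ins_self hc2, if_neg (by omega)] at this
        omega
      · rcases Nat.eq_or_lt_of_le h with h' | h'
        · exfalso
          rw [← h', get1_ins_self hc2, if_neg (by omega)] at h3
          omega
        · omega
    rw [get1_ins_gt hc2 hge] at h3
    refine ⟨i - 1, Finset.mem_filter.mpr ⟨mem_Maxa.mpr ⟨⟨by omega, by omega⟩, h3, ?_⟩, by omega⟩, by omega⟩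
    intro j hj1 hj2
    have := h4 (j+1) (by omega) (by omega)
    rw [get1_ins_gt hc2 (by omega)] at this
    simpa using this
  · rintro ⟨x, hx, rfl⟩
    rw [Finset.mem_filter, mem_Maxa] at hx
    obtain ⟨⟨⟨hx1, hx2⟩, hx3, hx4⟩, hx5⟩ := hx
    refine ⟨⟨by omega, by omega⟩, ?_, ?_⟩
    · rw [get1_ins_gt hc2 (by omega)]
      simpa using hx3
    · intro j hj1 hj2
      rw [get1_ins_gt hc2 (by omega)]
      exact hx4 (j-1) (by omega) (by omega)

theorem case23_card_Maxa : (Maxa (ins w c)).card = ((Maxa w).filter (fun x => c < x)).card := by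
  rw [case23_Maxa hc1 hc2 hcm]
  exact Finset.card_image_of_injective _ (fun i j h => by omega)

end Case23

theorem case1_card_Maxa {w : List ℕ} {c : ℕ} (hc1 : 1 ≤ c) (hc2 : c ≤ w.length)
    (hcm : get1 w c = maxVal w) :
    (Maxa (ins w c)).card = ((Maxb w).filter (fun x => c < x)).card := by
  rw [case1_Maxa hc1 hc2 hcm]
  exact Finset.card_image_of_injective _ (fun i j h => by omega)

-- Case 0 : all-zero word, insertion at 0
theorem Maxa_empty_of_maxZero {w : List ℕ} (h : maxVal w = 0) : Maxa w = ∅ := by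
  ext i
  rw [mem_Maxa, h]
  simp

theorem Maxb_eq_of_maxZero {w : List ℕ} (h : maxVal w = 0) : Maxb w = Finset.Icc 1 w.length := by
  ext i
  rw [mem_Maxb, h, Finset.mem_Icc]
  constructor
  · rintro ⟨⟨h1, h2⟩, _⟩; exact ⟨h1, h2⟩
  · rintro ⟨h1, h2⟩
    refine ⟨⟨h1, h2⟩, ?_⟩
    have := get1_le_maxVal w i
    omega

theorem case0_maxVal {w : List ℕ} (h : maxVal w = 0) : maxVal (ins w 0) = 0 := by
  rw [maxVal_ins (Nat.zero_le _), if_pos rfl, h]; simp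

theorem case0_card_Maxb {w : List ℕ} (h : maxVal w = 0) :
    (Maxb (ins w 0)).card = (Maxb w).card + 1 := by
  rw [Maxb_eq_of_maxZero h, Maxb_eq_of_maxZero (case0_maxVal h), length_ins (Nat.zero_le _)]
  simp

theorem case0_card_Maxa {w : List ℕ} (h : maxVal w = 0) : (Maxa (ins w 0)).card = 0 := by
  rw [Maxa_empty_of_maxZero (case0_maxVal h), Finset.card_empty]

-- i0 facts
theorem i0_mem {w : List ℕ} (hw : w ≠ []) :
    i0 w ∈ (Finset.Icc 1 w.length).filter (fun i =>
      get1 w i = maxVal w ∧ (i = 1 ∨ get1 w (i - 1) ≠ maxVal w)) := by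
  set S := (Finset.Icc 1 w.length).filter (fun i =>
      get1 w i = maxVal w ∧ (i = 1 ∨ get1 w (i - 1) ≠ maxVal w)) with hS
  have hT : ((Finset.Icc 1 w.length).filter (fun i => get1 w i = maxVal w)).Nonempty := by
    obtain ⟨i, h1, h2, h3⟩ := exists_get1_eq_maxVal hw
    exact ⟨i, Finset.mem_filter.mpr ⟨Finset.mem_Icc.mpr ⟨h1, h2⟩, h3⟩⟩
  set T := (Finset.Icc 1 w.length).filter (fun i => get1 w i = maxVal w) with hTdef
  have hmin : T.min' hT ∈ Finset.Icc 1 w.length ∧ get1 w (T.min' hT) = maxVal w :=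
    Finset.mem_filter.mp (T.min'_mem hT)
  rw [Finset.mem_Icc] at hmin
  obtain ⟨⟨hmin11, hmin12⟩, hmin2⟩ := hmin
  have hSne : S.Nonempty := by
    refine ⟨T.min' hT, ?_⟩
    rw [hS, Finset.mem_filter, Finset.mem_Icc]
    refine ⟨⟨hmin11, hmin12⟩, hmin2, ?_⟩
    by_cases h1 : T.min' hT = 1
    · exact Or.inl h1
    · refine Or.inr fun hcon => ?_
      have : T.min' hT - 1 ∈ T :=
        Finset.mem_filter.mpr ⟨Finset.mem_Icc.mpr ⟨by omega, by omega⟩, hcon⟩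
      have := T.min'_le _ this
      omega
  have : i0 w = S.max' hSne := by
    rw [i0, ← hS, Finset.max'_eq_sup' , Finset.sup'_eq_sup]
  rw [this]
  exact S.max'_mem hSne

theorem i0_facts {w : List ℕ} (hw : IsAreaSeq w) (hne : w ≠ []) (hm : 1 ≤ maxVal w) :
    2 ≤ i0 w ∧ i0 w ≤ w.length ∧ get1 w (i0 w - 1) + 1 = maxVal w ∧
      get1 w (i0 w) = maxVal w := by
  have h := i0_mem hne
  rw [Finset.mem_filter, Finset.mem_Icc] at h
  obtain ⟨⟨h1, h2⟩, h3, h4⟩ := h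
  have hfirst : get1 w 1 = 0 := hw.1 hne
  have hne1 : i0 w ≠ 1 := by
    rintro he
    rw [he, hfirst] at h3
    omega
  have h5 : get1 w (i0 w - 1) ≠ maxVal w := h4.resolve_left hne1
  have harea := hw.2 (i0 w - 1) (by omega) (by omega)
  rw [show i0 w - 1 + 1 = i0 w by omega] at harea
  have hle := get1_le_maxVal w (i0 w - 1)
  refine ⟨by omega, h2, by omega, h3⟩

theorem i0_zero {w : List ℕ} (hne : w ≠ []) (hm : maxVal w = 0) : i0 w = 1 := by
  have h := i0_mem hne
  rw [Finset.mem_filter, Finset.mem_Icc] at h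
  obtain ⟨⟨h1, h2⟩, _, h4⟩ := h
  rcases h4 with h4 | h4
  · exact h4
  · exfalso
    have := get1_le_maxVal w (i0 w - 1)
    omega

-- admissible list indexing
theorem adm_length_b (w : List ℕ) : (((Maxb w).sort (·≤·)).reverse).length = (Maxb w).card := by
  rw [List.length_reverse, Finset.length_sort]

theorem adm_length_a (w : List ℕ) : (((Maxa w).sort (·≤·)).reverse).length = (Maxa w).card := by
  rw [List.length_reverse, Finset.length_sort]

theorem adm_getD_b {w : List ℕ} (hw : w ≠ []) {a : ℕ} (ha : a < (Maxb w).card) :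
    (admissible w).getD a 0 = ((Maxb w).sort (·≤·)).reverse.getD a 0 := by
  rw [admissible, if_neg hw, List.append_assoc,
    List.getD_append _ _ _ _ (by rw [adm_length_b]; omega)]

theorem adm_getD_a {w : List ℕ} (hw : w ≠ []) {a : ℕ} (h1 : (Maxb w).card ≤ a)
    (h2 : a < (Maxb w).card + (Maxa w).card) :
    (admissible w).getD a 0 = ((Maxa w).sort (·≤·)).reverse.getD (a - (Maxb w).card) 0 := by
  rw [admissible, if_neg hw, List.append_assoc,
    List.getD_append_right _ _ _ _ (by rw [adm_length_b]; omega),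
    List.getD_append _ _ _ _ (by rw [adm_length_a, adm_length_b]; omega), adm_length_b]

theorem adm_getD_last {w : List ℕ} (hw : w ≠ []) {a : ℕ}
    (h1 : a = (Maxb w).card + (Maxa w).card) :
    (admissible w).getD a 0 = i0 w - 1 := by
  rw [admissible, if_neg hw, List.append_assoc,
    List.getD_append_right _ _ _ _ (by rw [adm_length_b]; omega),
    List.getD_append_right _ _ _ _ (by rw [adm_length_a, adm_length_b]; omega)]
  rw [adm_length_a, adm_length_b]
  simp only [h1]
  rw [show (Maxb w).card + (Maxa w).card - (Maxb w).card - (Maxa w).card = 0 by omega]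
  rfl

-- bseq lemmas
theorem bseq_succ (w : List ℕ) {i : ℕ} (h : 1 ≤ i) :
    bseq w (i + 1) = if bseq w i + 1 ≤ get1 w (i + 1) then bseq w i + 1 else 0 := by
  obtain ⟨k, rfl⟩ : ∃ k, i = k + 1 := ⟨i - 1, by omega⟩
  rfl

theorem bseq_append (u v : List ℕ) : ∀ i, i ≤ u.length → bseq (u ++ v) i = bseq u i
  | 0, _ => rfl
  | 1, _ => rfl
  | (k + 2), h => by
      rw [bseq_succ (u ++ v) (show 1 ≤ k + 1 by omega), bseq_succ u (show 1 ≤ k + 1 by omega),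
        bseq_append u v (k + 1) (by omega), get1_append_left v (by omega) (by omega)]

-- the main invariant of ψ
theorem psi_invariant : ∀ (r : List ℕ), r ≠ [] → IsAreaSeq r.reverse →
    IsAreaSeq (psiRev r) ∧ (psiRev r).length = r.length ∧
    bseq r.reverse r.length ≤ get1 r.reverse r.length ∧
    (Maxb (psiRev r)).card = bseq r.reverse r.length + 1 ∧
    (Maxa (psiRev r)).card = get1 r.reverse r.length - bseq r.reverse r.length
  | [], h, _ => absurd rfl h
  | [a], _, hw => by
      have ha : a = 0 := by
        have := hw.1 (by simp)
        simpa [get1] using this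
      subst ha
      have hpsi : psiRev [0] = [0] := by
        simp [psiRev, admissible, ins]
      rw [hpsi]
      refine ⟨⟨fun _ => rfl, fun i h1 h2 => by simp at h2; omega⟩, by simp, ?_, ?_, ?_⟩
      · show bseq [0] 1 ≤ get1 [0] 1
        simp [bseq]
      · show (Maxb [0]).card = bseq [0] 1 + 1
        rw [Maxb_eq_of_maxZero (by rfl)]
        simp [bseq]
      · show (Maxa [0]).card = get1 [0] 1 - bseq [0] 1
        rw [Maxa_empty_of_maxZero (by rfl)]
        simp [bseq, get1]
  | a :: b :: t, _, hw => by
      rw [List.reverse_cons] at hw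
      have IH := psi_invariant (b :: t) (by simp) (isAreaSeq_prefix hw)
      set s := b :: t with hs
      obtain ⟨IH1, IH2, IH3, IH4, IH5⟩ := IH
      have hsl : 1 ≤ s.length := by rw [hs]; simp
      have hvlen : (psiRev s).length = s.length := IH2
      have hvne : psiRev s ≠ [] := by
        intro h
        rw [h] at hvlen
        simp at hvlen
      have hlast : get1 (s.reverse ++ [a]) (s.length + 1) = a := by
        have := get1_concat_last s.reverse a
        rwa [List.length_reverse] at this
      have hprev : ∀ i, 1 ≤ i → i ≤ s.length →
          get1 (s.reverse ++ [a]) i = get1 s.reverse i := by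
        intro i h1 h2
        exact get1_append_left [a] h1 (by rw [List.length_reverse]; omega)
      have hal : a ≤ get1 s.reverse s.length + 1 := by
        have h2 := hw.2 s.length hsl (by simp)
        rwa [hlast, hprev s.length hsl le_rfl] at h2
      have hbval : bseq (s.reverse ++ [a]) (s.length + 1) =
          if bseq s.reverse s.length + 1 ≤ a then bseq s.reverse s.length + 1 else 0 := by
        rw [bseq_succ _ hsl, hlast, bseq_append _ _ _ (by rw [List.length_reverse])]
      rw [List.reverse_cons, List.length_cons, hbval, hlast,
        show psiRev (a :: s) = ins (psiRev s) ((admissible (psiRev s)).getD a 0) from rfl]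
      rcases Nat.lt_or_ge a (bseq s.reverse s.length + 1) with hA | hge
      · -- Case A : a ≤ B, insertion at a maximal position
        rw [if_neg (by omega)]
        have hacard : a < (Maxb (psiRev s)).card := by omega
        rw [adm_getD_b hvne hacard]
        have hcmem := sortRevGetD_mem (Maxb (psiRev s)) hacard
        rw [mem_Maxb] at hcmem
        obtain ⟨⟨hc1, hc2⟩, hcm⟩ := hcmem
        refine ⟨isAreaSeq_ins IH1 hc2, by rw [length_ins hc2, hvlen], by omega, ?_, ?_⟩
        · rw [case1_Maxb hc1 hc2 hcm]
          simp
        · rw [case1_card_Maxa hc1 hc2 hcm, card_filter_gt_sortRevGetD (Maxb (psiRev s)) hacard]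
          omega
      rcases Nat.lt_or_ge (get1 s.reverse s.length) a with hC | hB2
      · -- Case C : a = ℓ + 1, insertion at i0 - 1
        have haeq : a = get1 s.reverse s.length + 1 := by omega
        rw [if_pos (by omega)]
        rw [adm_getD_last hvne (by omega)]
        rcases Nat.eq_zero_or_pos (maxVal (psiRev s)) with hm | hm
        · -- all-zero image
          have hca : (Maxa (psiRev s)).card = 0 := by
            rw [Maxa_empty_of_maxZero hm]
            rfl
          rw [i0_zero hvne hm]
          simp only [Nat.sub_self]
          refine ⟨isAreaSeq_ins IH1 (Nat.zero_le _), by rw [length_ins (Nat.zero_le _), hvlen],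
            by omega, ?_, ?_⟩
          · rw [case0_card_Maxb hm]
            omega
          · rw [case0_card_Maxa hm]
            omega
        · obtain ⟨hi2, hiLen, hcm, himax⟩ := i0_facts IH1 hvne hm
          have hc1 : 1 ≤ i0 (psiRev s) - 1 := by omega
          have hc2 : i0 (psiRev s) - 1 ≤ (psiRev s).length := by omega
          refine ⟨isAreaSeq_ins IH1 hc2, by rw [length_ins hc2, hvlen], by omega, ?_, ?_⟩
          · rw [case23_card_Maxb hc1 hc2 hcm]
            omega
          · rw [case23_card_Maxa hc1 hc2 hcm]
            rw [Finset.filter_true_of_mem]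
            · omega
            · intro x hx
              rw [mem_Maxa] at hx
              by_contra hcon
              have := hx.2.2 (i0 (psiRev s)) (by omega) hiLen
              omega
      · -- Case B : B + 1 ≤ a ≤ ℓ, insertion at a Maxa position
        rw [if_pos hge]
        have h1 : (Maxb (psiRev s)).card ≤ a := by omega
        have h2 : a < (Maxb (psiRev s)).card + (Maxa (psiRev s)).card := by omega
        have hacard : a - (Maxb (psiRev s)).card < (Maxa (psiRev s)).card := by omega
        rw [adm_getD_a hvne h1 h2]
        have hcmem := sortRevGetD_mem (Maxa (psiRev s)) hacard
        rw [mem_Maxa] at hcmem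
        obtain ⟨⟨hc1, hc2⟩, hcm, _⟩ := hcmem
        refine ⟨isAreaSeq_ins IH1 hc2, by rw [length_ins hc2, hvlen], by omega, ?_, ?_⟩
        · rw [case23_card_Maxb hc1 hc2 hcm]
          omega
        · rw [case23_card_Maxa hc1 hc2 hcm,
            card_filter_gt_sortRevGetD (Maxa (psiRev s)) hacard]
          omega

/-- For an area sequence `w = u a` of size `n ≥ 2` with bounce sequence
`b_1 … b_n`, we have `b_n = 0` if and only if
`max (ψ w) = max (ψ u) + 1`. -/
theorem bseq_last_eq_zero_iff (u : List ℕ) (a : ℕ)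
    (hw : IsAreaSeq (u ++ [a])) (hn : 2 ≤ (u ++ [a]).length) :
    bseq (u ++ [a]) (u ++ [a]).length = 0 ↔
      maxVal (psi (u ++ [a])) = maxVal (psi u) + 1 := by
  have hune : u ≠ [] := by
    intro h
    rw [h] at hn
    simp at hn
  have hul : 1 ≤ u.length := by
    rcases u with _ | ⟨x, t⟩
    · simp at hune
    · simp
  have IH := psi_invariant u.reverse (by simpa using hune)
    (by rw [List.reverse_reverse]; exact isAreaSeq_prefix hw)
  simp only [List.reverse_reverse, List.length_reverse] at IH
  obtain ⟨IH1, IH2, IH3, IH4, IH5⟩ := IH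
  have hvlen : (psiRev u.reverse).length = u.length := IH2
  have hvne : psiRev u.reverse ≠ [] := by
    intro h
    rw [h] at hvlen
    simp at hvlen
    omega
  have hlast : get1 (u ++ [a]) (u.length + 1) = a := get1_concat_last u a
  have hal : a ≤ get1 u u.length + 1 := by
    have h2 := hw.2 u.length hul (by simp)
    rwa [hlast, get1_append_left [a] hul le_rfl] at h2
  have hlen : (u ++ [a]).length = u.length + 1 := by simp
  have hbval : bseq (u ++ [a]) (u.length + 1) =
      if bseq u u.length + 1 ≤ a then bseq u u.length + 1 else 0 := by
    rw [bseq_succ _ hul, hlast, bseq_append _ _ _ le_rfl]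
  have hpsi : psi (u ++ [a]) = ins (psiRev u.reverse) ((admissible (psiRev u.reverse)).getD a 0) := by
    rw [psi, List.reverse_append]
    rfl
  rw [hlen, hbval, hpsi, psi]
  rcases Nat.lt_or_ge a (bseq u u.length + 1) with hA | hge
  · -- a ≤ B : bounce, and the maximum increases
    rw [if_neg (by omega)]
    have hacard : a < (Maxb (psiRev u.reverse)).card := by omega
    rw [adm_getD_b hvne hacard]
    have hcmem := sortRevGetD_mem (Maxb (psiRev u.reverse)) hacard
    rw [mem_Maxb] at hcmem
    obtain ⟨⟨hc1, hc2⟩, hcm⟩ := hcmem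
    rw [case1_maxVal hc1 hc2 hcm]
    simp
  · -- a > B : no bounce, and the maximum is unchanged
    rw [if_pos hge]
    have hmax : maxVal (ins (psiRev u.reverse) ((admissible (psiRev u.reverse)).getD a 0)) =
        maxVal (psiRev u.reverse) := by
      rcases Nat.lt_or_ge (get1 u u.length) a with hC | hB2
      · -- a = ℓ + 1
        rw [adm_getD_last hvne (by omega)]
        rcases Nat.eq_zero_or_pos (maxVal (psiRev u.reverse)) with hm | hm
        · rw [i0_zero hvne hm]
          simp only [Nat.sub_self]
          rw [case0_maxVal hm, hm]
        · obtain ⟨hi2, hiLen, hcm, _⟩ := i0_facts IH1 hvne hm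
          exact case23_maxVal (by omega) (by omega) hcm
      · -- B + 1 ≤ a ≤ ℓ
        rw [adm_getD_a hvne (by omega) (by omega)]
        have hacard : a - (Maxb (psiRev u.reverse)).card < (Maxa (psiRev u.reverse)).card := by
          omega
        have hcmem := sortRevGetD_mem (Maxa (psiRev u.reverse)) hacard
        rw [mem_Maxa] at hcmem
        obtain ⟨⟨hc1, hc2⟩, hcm, _⟩ := hcmem
        exact case23_maxVal hc1 hc2 hcm
    rw [hmax]
    omega
end
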